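/- Let (A, 𝔪) be a noetherian complete local ring. Then every pure ring homomorphism f : A → B splits as a homomorphism of A-modules; that is, there exists an A-linear map g : B → A (where B is regarded as an A-module via f) such that g(f(a)) = a for all a ∈ A. -/

import Mathlib

universe u

open scoped TensorProduct

/-- `B` regarded as an `A`-module via restriction of scalars along `f : A →+* B`. -/
def PushMod {A B : Type u} [CommRing A] [CommRing B] (f : A →+* B) : Type u := B

/-- The canonical map `B → PushMod f`. -/
def PushMod.of {A B : Type u} [CommRing A] [CommRing B] (f : A →+* B) (b : B) : PushMod f := b

noncomputable instance {A B : Type u} [CommRing A] [CommRing B] (f : A →+* B) :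
    AddCommGroup (PushMod f) := inferInstanceAs (AddCommGroup B)

noncomputable instance {A B : Type u} [CommRing A] [CommRing B] (f : A →+* B) :
    Module A (PushMod f) := Module.compHom B f

/-- `f : A →+* B` is a pure ring homomorphism: for every `A`-module `M` the induced map
`M ≅ M ⊗_A A → M ⊗_A B`, `m ↦ m ⊗ 1` (with `B` an `A`-module via `f`), is injective. -/
def IsPureHom {A B : Type u} [CommRing A] [CommRing B] (f : A →+* B) : Prop :=
  ∀ (M : Type u) [AddCommGroup M] [Module A M],
    Function.Injective fun m : M => m ⊗ₜ[A] PushMod.of f 1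

section Part1

variable {A B : Type u} [CommRing A] [CommRing B] (f : A →+* B)

lemma PushMod.smul_def (a : A) (x : B) : a • (PushMod.of f x) = PushMod.of f (f a * x) := rfl

lemma PushMod.of_add (b b' : B) : PushMod.of f (b + b') = PushMod.of f b + PushMod.of f b' := rfl

lemma purity_solve (hf : IsPureHom f) {ι κ : Type u} [Fintype ι] [Fintype κ] [DecidableEq κ]
    (C : ι → κ → A) (d : ι → A)
    (Y : κ → B) (hY : ∀ e, ∑ j, f (C e j) * Y j = f (d e)) :
    ∃ x : κ → A, ∀ e, ∑ j, C e j * x j = d e := by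
  classical
  let T : (κ → A) →ₗ[A] (ι → A) := LinearMap.pi (fun e => ∑ j, C e j • LinearMap.proj j)
  have hT : ∀ (x : κ → A) (e : ι), T x e = ∑ j, C e j * x j := by
    intro x e
    simp [T, LinearMap.pi_apply, LinearMap.sum_apply, smul_eq_mul]
  let U := LinearMap.range T
  -- key identity in (ι → A) ⊗ PushMod f
  have key : (d ⊗ₜ[A] PushMod.of f 1 : (ι → A) ⊗[A] PushMod f)
      = ∑ j, (fun e => C e j) ⊗ₜ[A] PushMod.of f (Y j) := by
    have hinj := ((TensorProduct.comm A (ι → A) (PushMod f)).trans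
      (TensorProduct.piScalarRight A A (PushMod f) ι)).injective
    apply hinj
    rw [← LinearEquiv.coe_coe, map_sum]
    simp only [LinearEquiv.coe_coe, LinearEquiv.trans_apply, TensorProduct.comm_tmul,
      TensorProduct.piScalarRight_apply, TensorProduct.piScalarRightHom_tmul]
    funext e
    simp only [Finset.sum_apply]
    show d e • PushMod.of f 1 = ∑ j, C e j • PushMod.of f (Y j)
    simp only [PushMod.smul_def]
    show PushMod.of f (f (d e) * 1) = ∑ j, PushMod.of f (f (C e j) * Y j)
    rw [mul_one, ← hY e]
    rfl
  have key2 : ((U.mkQ d) ⊗ₜ[A] PushMod.of f 1 : ((ι → A) ⧸ U) ⊗[A] PushMod f) = 0 := by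
    have := congrArg (LinearMap.rTensor (PushMod f) U.mkQ) key
    simp only [LinearMap.rTensor_tmul, map_sum] at this
    rw [this]
    apply Finset.sum_eq_zero
    intro j _
    have hmem : (fun e => C e j) ∈ U := by
      refine ⟨Pi.single j 1, ?_⟩
      funext e
      rw [hT]
      simp [Pi.single_apply, Finset.sum_ite_eq']
    have : U.mkQ (fun e => C e j) = 0 := (Submodule.Quotient.mk_eq_zero U).2 hmem
    rw [this, TensorProduct.zero_tmul]
  have hd : U.mkQ d = 0 := by
    apply hf ((ι → A) ⧸ U)
    show (U.mkQ d) ⊗ₜ[A] PushMod.of f 1 = (0 : (ι → A) ⧸ U) ⊗ₜ[A] PushMod.of f 1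
    rw [key2, TensorProduct.zero_tmul]
  have : d ∈ U := (Submodule.Quotient.mk_eq_zero U).1 hd
  obtain ⟨x, hx⟩ := this
  exact ⟨x, fun e => by rw [← hT x e, hx]⟩

end Part1

section Part2

variable {A : Type u} [CommRing A] [IsNoetherianRing A] [IsLocalRing A]

local notation "𝔪" => IsLocalRing.maximalIdeal A

lemma smul_top_ideal {R : Type u} [CommRing R] (I : Ideal R) :
    (I • ⊤ : Submodule R R) = I := by
  rw [smul_eq_mul, Ideal.mul_top]

set_option maxHeartbeats 1000000 in
set_option synthInstance.maxHeartbeats 400000 in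
lemma artinian_quot_pow (n : ℕ) : IsArtinian A (A ⧸ (𝔪 ^ n • ⊤ : Submodule A A)) := by
  induction n with
  | zero =>
    have h : (𝔪 ^ 0 • ⊤ : Submodule A A) = ⊤ := by simp
    haveI : Subsingleton (A ⧸ (𝔪 ^ 0 • ⊤ : Submodule A A)) :=
      Submodule.Quotient.subsingleton_iff.2 h
    exact isArtinian_of_finite
  | succ n ih =>
    set p : Submodule A A := 𝔪 ^ (n+1) • ⊤ with hp
    set q : Submodule A A := 𝔪 ^ n • ⊤ with hq
    have hpq : p ≤ q := by
      apply Submodule.smul_mono_left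
      exact Ideal.pow_le_pow_right (Nat.le_succ n)
    set N : Submodule A (A ⧸ p) := Submodule.map p.mkQ q with hN
    have hqfg : q.FG := IsNoetherian.noetherian q
    have hNfg : N.FG := Submodule.FG.map _ hqfg
    have hTor : Module.IsTorsionBySet A N (𝔪 : Set A) := by
      rintro ⟨x, hx⟩ ⟨m, hm⟩
      obtain ⟨y, hy, rfl⟩ := hx
      ext
      show m • (p.mkQ y) = 0
      rw [← map_smul, Submodule.mkQ_apply, Submodule.Quotient.mk_eq_zero]
      show m • y ∈ p
      rw [hp, smul_top_ideal, smul_eq_mul, pow_succ, mul_comm m y]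
      apply Ideal.mul_mem_mul _ hm
      rw [hq, smul_top_ideal] at hy
      exact hy
    letI : Module (A ⧸ 𝔪) N := hTor.module
    haveI : IsScalarTower A (A ⧸ 𝔪) N := hTor.isScalarTower
    haveI : Module.Finite A N := Module.Finite.iff_fg.2 hNfg
    haveI : Module.Finite (A ⧸ 𝔪) N := Module.Finite.of_restrictScalars_finite A _ _
    letI : Field (A ⧸ 𝔪) := Ideal.Quotient.field 𝔪
    haveI hak : IsArtinian (A ⧸ 𝔪) N := isArtinian_of_fg_of_artinian'
    have hNart : IsArtinian A N := by
      rw [isArtinian_iff]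
      let g : Submodule A N ↪o Submodule (A ⧸ 𝔪) N :=
        { toFun := fun s =>
            { carrier := s
              add_mem' := fun h1 h2 => s.add_mem h1 h2
              zero_mem' := s.zero_mem
              smul_mem' := by
                rintro ⟨c⟩ x hx
                show (Ideal.Quotient.mk 𝔪 c) • x ∈ s
                have : (Ideal.Quotient.mk 𝔪 c) • x = c • x := hTor.mk_smul c x
                rw [this]
                exact s.smul_mem c hx }
          inj' := by
            intro s t hst
            ext x
            exact Set.ext_iff.1 (congrArg (fun (u : Submodule (A ⧸ 𝔪) N) => (u : Set N)) hst) x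
          map_rel_iff' := Iff.rfl }
      exact g.ltEmbedding.wellFounded (isArtinian_iff _ _ |>.1 hak)
    have hker : ∀ x : A, p.mkQ x ∈ N ↔ x ∈ q := by
      intro x
      constructor
      · rintro ⟨y, hy, hxy⟩
        have : x - y ∈ p := by
          rw [← Submodule.Quotient.eq p]
          exact hxy.symm
        have hx : x = y + (x - y) := by ring
        rw [hx]
        exact q.add_mem hy (hpq this)
      · intro hx
        exact ⟨x, hx, rfl⟩
    set G : (A ⧸ p) →ₗ[A] (A ⧸ q) := Submodule.mapQ p q LinearMap.id hpq with hG
    have hrk : LinearMap.range N.subtype = LinearMap.ker G := by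
      ext x
      simp only [Submodule.range_subtype]
      obtain ⟨y, rfl⟩ := p.mkQ_surjective x
      rw [LinearMap.mem_ker]
      show p.mkQ y ∈ N ↔ G (Submodule.Quotient.mk y) = 0
      rw [hker]
      have hGy : G (Submodule.Quotient.mk y) = Submodule.Quotient.mk y :=
        Submodule.mapQ_apply p q LinearMap.id y (h := hpq)
      rw [hGy, Submodule.Quotient.mk_eq_zero]
    exact isArtinian_of_range_eq_ker N.subtype G hrk

lemma exists_min_ideal (n : ℕ) (S : Set (Ideal A)) (hS : S.Nonempty)
    (h : ∀ J ∈ S, 𝔪 ^ n ≤ J) :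
    ∃ J₀ ∈ S, ∀ J ∈ S, ¬ J < J₀ := by
  haveI := artinian_quot_pow (A := A) n
  set p : Submodule A A := 𝔪 ^ n • ⊤ with hp
  have hple : ∀ J ∈ S, p ≤ (J : Submodule A A) := by
    intro J hJ
    rw [hp, smul_top_ideal]
    exact h J hJ
  set Φ : Ideal A → Submodule A (A ⧸ p) := fun J => Submodule.map p.mkQ J with hΦ
  have hcomap : ∀ J ∈ S, Submodule.comap p.mkQ (Φ J) = J := by
    intro J hJ
    rw [hΦ]
    show Submodule.comap p.mkQ (Submodule.map p.mkQ J) = J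
    rw [Submodule.comap_map_eq, Submodule.ker_mkQ, sup_eq_left.2 (hple J hJ)]
  obtain ⟨T₀, hT₀, hmin⟩ := IsArtinian.set_has_minimal (Φ '' S) (hS.image Φ)
  obtain ⟨J₀, hJ₀S, hJ₀⟩ := hT₀
  refine ⟨J₀, hJ₀S, ?_⟩
  intro J hJ hlt
  apply hmin (Φ J) ⟨J, hJ, rfl⟩
  rw [← hJ₀]
  apply lt_of_le_of_ne (Submodule.map_mono hlt.le)
  intro heq
  have := congrArg (Submodule.comap p.mkQ) heq
  rw [hcomap J hJ, hcomap J₀ hJ₀S] at this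
  exact hlt.ne this
end Part2

section Part3

variable {A : Type u} [CommRing A] [IsNoetherianRing A] [IsLocalRing A]
  [IsAdicComplete (IsLocalRing.maximalIdeal A) A]

local notation "𝔪" => IsLocalRing.maximalIdeal A

theorem linear_compact {ι : Type u} (a : ι → A) (I : ι → Ideal A)
    (h : ∀ s : Finset ι, ∃ x : A, ∀ i ∈ s, x - a i ∈ I i) :
    ∃ x : A, ∀ i, x - a i ∈ I i := by
  classical
  -- the coset predicates
  set P : Finset ι → ℕ → A → Prop :=
    fun s n x => ∀ i ∈ s, x - a i ∈ I i + 𝔪 ^ n with hPdef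
  set J : Finset ι → ℕ → Ideal A := fun s n => ⨅ i ∈ s, (I i + 𝔪 ^ n) with hJdef
  have hJmem : ∀ s n x, x ∈ J s n ↔ ∀ i ∈ s, x ∈ I i + 𝔪 ^ n := by
    intro s n x
    simp [hJdef, Submodule.mem_iInf]
  have hJtop : ∀ s n, 𝔪 ^ n ≤ J s n := by
    intro s n
    rw [hJdef]
    refine le_iInf fun i => le_iInf fun _ => ?_
    exact le_sup_right
  have hJanti : ∀ {s s' : Finset ι} (n : ℕ), s ⊆ s' → J s' n ≤ J s n := by
    intro s s' n hss
    rw [hJdef]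
    exact le_iInf fun i => le_iInf fun hi => iInf_le_of_le i (iInf_le _ (hss hi))
  have hJmono_n : ∀ (s : Finset ι) {n n' : ℕ}, n ≤ n' → J s n' ≤ J s n := by
    intro s n n' hnn
    refine le_iInf fun i => le_iInf fun hi => ?_
    refine le_trans (iInf_le_of_le i (iInf_le _ hi)) ?_
    exact sup_le le_sup_left (le_trans (Ideal.pow_le_pow_right hnn) le_sup_right)
  have hPmono : ∀ {s s' : Finset ι} (n : ℕ) (x : A), s ⊆ s' → P s' n x → P s n x :=
    fun n x hss hP i hi => hP i (hss hi)
  have hPmono_n : ∀ (s : Finset ι) {n n' : ℕ} (x : A), n ≤ n' → P s n' x → P s n x := by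
    intro s n n' x hnn hP i hi
    refine Submodule.mem_sup.2 ?_
    obtain ⟨y, hy, z, hz, hyz⟩ := Submodule.mem_sup.1 (hP i hi)
    exact ⟨y, hy, z, Ideal.pow_le_pow_right hnn hz, hyz⟩
  have hP1 : ∀ (s : Finset ι) (n : ℕ), ∃ x, P s n x := by
    intro s n
    obtain ⟨x, hx⟩ := h s
    exact ⟨x, fun i hi => Submodule.mem_sup_left (hx i hi)⟩
  have hcoset : ∀ (s : Finset ι) (n : ℕ) (x y : A), P s n x →
      (P s n y ↔ y - x ∈ J s n) := by
    intro s n x y hx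
    constructor
    · intro hy
      rw [hJmem]
      intro i hi
      have : y - x = (y - a i) - (x - a i) := by ring
      rw [this]
      exact sub_mem (hy i hi) (hx i hi)
    · intro hyx i hi
      have : y - a i = (y - x) + (x - a i) := by ring
      rw [this]
      exact add_mem ((hJmem s n _).1 hyx i hi) (hx i hi)
  -- minimal finsets
  have hmin : ∀ (n : ℕ) (s₀ : Finset ι), ∃ s : Finset ι, s₀ ⊆ s ∧
      ∀ t : Finset ι, J (s ∪ t) n = J s n := by
    intro n s₀
    obtain ⟨J₀, hJ₀S, hJ₀min⟩ := exists_min_ideal n {K | ∃ t : Finset ι, K = J (s₀ ∪ t) n}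
      ⟨J (s₀ ∪ ∅) n, ⟨∅, rfl⟩⟩ (by rintro K ⟨t, rfl⟩; exact hJtop _ n)
    obtain ⟨t₀, rfl⟩ := hJ₀S
    refine ⟨s₀ ∪ t₀, Finset.subset_union_left, ?_⟩
    intro t
    have h1 : J ((s₀ ∪ t₀) ∪ t) n ≤ J (s₀ ∪ t₀) n := hJanti n Finset.subset_union_left
    rcases eq_or_lt_of_le h1 with heq | hlt
    · exact heq
    · exact absurd hlt (hJ₀min _ ⟨t₀ ∪ t, by rw [Finset.union_assoc]⟩)
  -- the monotone sequence of finsets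
  let sfun : ℕ → Finset ι := fun n =>
    Nat.rec (Classical.choose (hmin 0 ∅))
      (fun n prev => Classical.choose (hmin (n+1) prev)) n
  have hs_succ : ∀ n, sfun (n+1) = Classical.choose (hmin (n+1) (sfun n)) := fun n => rfl
  have hs_mono : ∀ n, sfun n ⊆ sfun (n+1) := by
    intro n
    rw [hs_succ]
    exact (Classical.choose_spec (hmin (n+1) (sfun n))).1
  have hs_min : ∀ n (t : Finset ι), J (sfun n ∪ t) n = J (sfun n) n := by
    intro n
    cases n with
    | zero => exact (Classical.choose_spec (hmin 0 ∅)).2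
    | succ n => exact (Classical.choose_spec (hmin (n+1) (sfun n))).2
  have hs_mono' : ∀ {m m' : ℕ}, m ≤ m' → sfun m ⊆ sfun m' := by
    intro m m' hmm
    induction hmm with
    | refl => exact Finset.Subset.refl _
    | step h ih => exact ih.trans (hs_mono _)
  -- global minimality consequence
  have hglob : ∀ (n : ℕ) (t : Finset ι) (x : A), P (sfun n) n x → P t n x := by
    intro n t x hx
    obtain ⟨y, hy⟩ := hP1 (sfun n ∪ t) n
    have hy1 : P (sfun n) n y := hPmono n y Finset.subset_union_left hy
    have hyx : x - y ∈ J (sfun n ∪ t) n := by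
      rw [hs_min]
      exact (hcoset _ n y x hy1).1 hx
    have : P (sfun n ∪ t) n x := (hcoset _ n y x hy).2 hyx
    exact hPmono n x Finset.subset_union_right this
  -- Jmin decreasing
  have hJm_dec : ∀ {m m' : ℕ}, m ≤ m' → J (sfun m') m' ≤ J (sfun m) m := by
    intro m m' hmm
    calc J (sfun m') m' ≤ J (sfun m') m := hJmono_n _ hmm
    _ = J (sfun m ∪ sfun m') m := by
        rw [Finset.union_eq_right.2 (hs_mono' hmm)]
    _ = J (sfun m) m := hs_min m _
  -- stabilization level
  have hNex : ∀ n : ℕ, ∃ m₀, n ≤ m₀ ∧ ∀ m, m₀ ≤ m →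
      J (sfun m) m + 𝔪 ^ n = J (sfun m₀) m₀ + 𝔪 ^ n := by
    intro n
    obtain ⟨K₀, hK₀S, hK₀min⟩ := exists_min_ideal n
      {K | ∃ m, n ≤ m ∧ K = J (sfun m) m + 𝔪 ^ n}
      ⟨J (sfun n) n + 𝔪 ^ n, ⟨n, le_refl n, rfl⟩⟩
      (by rintro K ⟨m, hm, rfl⟩; exact le_sup_right)
    obtain ⟨m₀, hm₀, rfl⟩ := hK₀S
    refine ⟨m₀, hm₀, ?_⟩
    intro m hm
    have h1 : J (sfun m) m + 𝔪 ^ n ≤ J (sfun m₀) m₀ + 𝔪 ^ n :=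
      sup_le_sup_right (hJm_dec hm) _
    rcases eq_or_lt_of_le h1 with heq | hlt
    · exact heq
    · exact absurd hlt (hK₀min _ ⟨m, le_trans hm₀ hm, rfl⟩)
  let N : ℕ → ℕ := fun n => Classical.choose (hNex n)
  have hNn : ∀ n, n ≤ N n := fun n => (Classical.choose_spec (hNex n)).1
  have hNstab : ∀ n m, N n ≤ m →
      J (sfun m) m + 𝔪 ^ n = J (sfun (N n)) (N n) + 𝔪 ^ n := by
    intro n m hm
    exact (Classical.choose_spec (hNex n)).2 m hm
  -- E n
  set E : ℕ → A → Prop := fun n x => ∃ y, P (sfun (N n)) (N n) y ∧ x - y ∈ 𝔪 ^ n with hEdef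
  have hPNm : ∀ (n m : ℕ), N n ≤ m → ∀ y, P (sfun m) m y → P (sfun (N n)) (N n) y := by
    intro n m hm y hy
    exact hPmono_n _ y hm (hglob m (sfun (N n)) y hy)
  have hstab : ∀ (n m : ℕ), N n ≤ m → ∀ x,
      (E n x ↔ ∃ y, P (sfun m) m y ∧ x - y ∈ 𝔪 ^ n) := by
    intro n m hm x
    constructor
    · rintro ⟨y, hy, hxy⟩
      obtain ⟨z, hz⟩ := hP1 (sfun m) m
      have hz' : P (sfun (N n)) (N n) z := hPNm n m hm z hz
      have hyz : y - z ∈ J (sfun (N n)) (N n) := (hcoset _ _ z y hz').1 hy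
      have hyz2 : y - z ∈ J (sfun m) m + 𝔪 ^ n := by
        rw [hNstab n m hm]
        exact Submodule.mem_sup_left hyz
      obtain ⟨j, hj, u, hu, hju⟩ := Submodule.mem_sup.1 hyz2
      refine ⟨z + j, ?_, ?_⟩
      · refine (hcoset _ _ z (z + j) hz).2 ?_
        simpa using hj
      · have : x - (z + j) = (x - y) + u := by
          linear_combination -hju
        rw [this]
        exact add_mem hxy hu
    · rintro ⟨y, hy, hxy⟩
      exact ⟨y, hPNm n m hm y hy, hxy⟩
  have hE1 : ∀ n, ∃ x, E n x := by
    intro n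
    obtain ⟨y, hy⟩ := hP1 (sfun (N n)) (N n)
    exact ⟨y, y, hy, by simp⟩
  have hE4 : ∀ n x, E n x → ∃ x', E (n+1) x' ∧ x - x' ∈ 𝔪 ^ n := by
    intro n x hx
    set m := max (N n) (N (n+1)) with hm
    obtain ⟨y, hy, hxy⟩ := (hstab n m (le_max_left _ _) x).1 hx
    refine ⟨y, ?_, hxy⟩
    refine (hstab (n+1) m (le_max_right _ _) y).2 ⟨y, hy, by simp⟩
  -- the Cauchy sequence
  let Z : (n : ℕ) → {x : A // E n x} := fun n =>
    Nat.rec ⟨Classical.choose (hE1 0), Classical.choose_spec (hE1 0)⟩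
      (fun n p => ⟨Classical.choose (hE4 n p.1 p.2),
        (Classical.choose_spec (hE4 n p.1 p.2)).1⟩) n
  have hZsucc : ∀ n, (Z n).1 - (Z (n+1)).1 ∈ 𝔪 ^ n := by
    intro n
    exact (Classical.choose_spec (hE4 n (Z n).1 (Z n).2)).2
  have hZcauchy : ∀ {m n : ℕ}, m ≤ n → (Z m).1 - (Z n).1 ∈ 𝔪 ^ m := by
    intro m n hmn
    induction hmn with
    | refl => simp
    | @step n h ih =>
      have h2 : (Z n).1 - (Z (n+1)).1 ∈ 𝔪 ^ m :=
        Ideal.pow_le_pow_right h (hZsucc n)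
      have : (Z m).1 - (Z (n+1)).1 = ((Z m).1 - (Z n).1) + ((Z n).1 - (Z (n+1)).1) := by ring
      rw [this]
      exact add_mem ih h2
  obtain ⟨L, hL⟩ := IsPrecomplete.prec (IsAdicComplete.toIsPrecomplete (I := 𝔪) (M := A))
    (f := fun n => (Z n).1) (by
      intro m n hmn
      rw [SModEq.sub_mem, smul_top_ideal]
      exact hZcauchy hmn)
  have hLmem : ∀ n, (Z n).1 - L ∈ 𝔪 ^ n := by
    intro n
    have := hL n
    rw [SModEq.sub_mem, smul_top_ideal] at this
    exact this
  refine ⟨L, ?_⟩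
  intro i
  -- L - a i ∈ I i + 𝔪^n for all n
  have hmem : ∀ n, L - a i ∈ I i + 𝔪 ^ n := by
    intro n
    obtain ⟨y, hy, hzy⟩ := (Z n).2
    have h1 : P {i} (N n) y := hglob (N n) {i} y hy
    have h2 : y - a i ∈ I i + 𝔪 ^ (N n) := h1 i (Finset.mem_singleton_self i)
    have h3 : y - a i ∈ I i + 𝔪 ^ n := by
      obtain ⟨w, hw, u, hu, hwu⟩ := Submodule.mem_sup.1 h2
      exact Submodule.mem_sup.2 ⟨w, hw, u, Ideal.pow_le_pow_right (hNn n) hu, hwu⟩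
    have h4 : L - a i = (y - a i) + ((Z n).1 - y) - ((Z n).1 - L) := by ring
    rw [h4]
    refine sub_mem (add_mem h3 ?_) ?_
    · exact Submodule.mem_sup_right hzy
    · exact Submodule.mem_sup_right (hLmem n)
  -- Krull intersection
  set v := L - a i with hv
  haveI hfin : Module.Finite A (A ⧸ I i) := Module.Finite.quotient A _
  have hbot : (⨅ n : ℕ, 𝔪 ^ n • ⊤ : Submodule A (A ⧸ I i)) = ⊥ :=
    Ideal.iInf_pow_smul_eq_bot_of_isLocalRing (I := 𝔪) (M := A ⧸ I i)
      (Ideal.IsMaximal.ne_top (IsLocalRing.maximalIdeal.isMaximal A))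
  have hvmem : Submodule.Quotient.mk (p := (I i : Submodule A A)) v ∈
      (⨅ n : ℕ, 𝔪 ^ n • ⊤ : Submodule A (A ⧸ I i)) := by
    rw [Submodule.mem_iInf]
    intro n
    obtain ⟨w, hw, u, hu, hwu⟩ := Submodule.mem_sup.1 (hmem n)
    have : Submodule.Quotient.mk (p := (I i : Submodule A A)) v
        = Submodule.Quotient.mk (p := (I i : Submodule A A)) u := by
      rw [Submodule.Quotient.eq]
      have : v - u = w := by rw [← hwu]; ring
      rw [this]; exact hw
    rw [this]
    have : Submodule.Quotient.mk (p := (I i : Submodule A A)) u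
        = u • Submodule.Quotient.mk (p := (I i : Submodule A A)) 1 := by
      rw [← Submodule.Quotient.mk_smul, smul_eq_mul, mul_one]
    rw [this]
    exact Submodule.smul_mem_smul hu Submodule.mem_top
  rw [hbot] at hvmem
  rw [Submodule.mem_bot] at hvmem
  rwa [← Submodule.Quotient.mk_eq_zero (I i : Submodule A A)]

end Part3

section Part4

variable {A B : Type u} [CommRing A] [CommRing B] (f : A →+* B)

-- the bundled "evaluate equation lhs at x" map, linear in the coefficient finsupp
noncomputable def SLcomp (b : B) : A →ₗ[A] ((B → A) →ₗ[A] A) where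
  toFun v := v • LinearMap.proj b
  map_add' v w := add_smul v w _
  map_smul' v w := by
    simp [smul_smul]

noncomputable def SL : (B →₀ A) →ₗ[A] ((B → A) →ₗ[A] A) :=
  Finsupp.lsum A (fun b => SLcomp b)

lemma SL_single (b : B) (c : A) (x : B → A) : SL (Finsupp.single b c) x = c * x b := by
  simp [SL, SLcomp, smul_eq_mul]

lemma SL_apply (c : B →₀ A) (x : B → A) : SL c x = ∑ b ∈ c.support, c b * x b := by
  simp only [SL, Finsupp.lsum_apply, Finsupp.sum, LinearMap.sum_apply]
  refine Finset.sum_congr rfl fun b _ => ?_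
  simp [SLcomp, smul_eq_mul]

lemma SL_eq_of_agree (c : B →₀ A) (x y : B → A) (h : ∀ b ∈ c.support, x b = y b) :
    SL c x = SL c y := by
  rw [SL_apply, SL_apply]
  exact Finset.sum_congr rfl fun b hb => by rw [h b hb]

-- the B-side evaluation
noncomputable def LB : (B →₀ A) →ₗ[A] PushMod f :=
  Finsupp.linearCombination A (PushMod.of f)

lemma LB_single (b : B) (c : A) : LB f (Finsupp.single b c) = c • PushMod.of f b :=
  Finsupp.linearCombination_single A c b

def T0 : Set ((B →₀ A) × A) := {e | LB f e.1 = PushMod.of f (f e.2)}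

def Good (T : Set ((B →₀ A) × A)) : Prop :=
  ∀ t : Finset ((B →₀ A) × A), ↑t ⊆ T → ∃ x : B → A, ∀ e ∈ t, SL e.1 x = e.2

lemma pushmod_of_injective : Function.Injective (PushMod.of f) := fun _ _ h => h

lemma good_T0 (hf : IsPureHom f) : Good (T0 f) := by
  classical
  intro t ht
  set s : Finset B := t.sup (fun e => e.1.support) with hs
  have hsup : ∀ e ∈ t, e.1.support ⊆ s := fun e he => Finset.le_sup (f := fun e => e.1.support) he
  set C : {e // e ∈ t} → {b // b ∈ s} → A := fun e j => e.1.1 j.1 with hC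
  set d : {e // e ∈ t} → A := fun e => e.1.2 with hd
  set Y : {b // b ∈ s} → B := fun j => j.1 with hY
  have key : ∀ e : {e // e ∈ t}, ∑ j, f (C e j) * Y j = f (d e) := by
    intro e
    apply pushmod_of_injective f
    have h1 : PushMod.of f (∑ j : {b // b ∈ s}, f (C e j) * Y j)
        = ∑ j : {b // b ∈ s}, (C e j) • PushMod.of f (Y j) := rfl
    rw [h1]
    have h2 : ∑ j : {b // b ∈ s}, (C e j) • PushMod.of f (Y j)
        = ∑ b ∈ s, e.1.1 b • PushMod.of f b := by
      rw [← Finset.sum_coe_sort s (fun b => e.1.1 b • PushMod.of f b)]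
    rw [h2]
    have h3 : ∑ b ∈ s, e.1.1 b • PushMod.of f b
        = ∑ b ∈ e.1.1.support, e.1.1 b • PushMod.of f b := by
      symm
      apply Finset.sum_subset (hsup e.1 e.2)
      intro b _ hb
      rw [Finsupp.notMem_support_iff.1 hb, zero_smul]
    rw [h3]
    have h4 : ∑ b ∈ e.1.1.support, e.1.1 b • PushMod.of f b = LB f e.1.1 := by
      rw [LB, Finsupp.linearCombination_apply, Finsupp.sum]
    rw [h4]
    exact ht e.2
  obtain ⟨x, hx⟩ := purity_solve f hf C d Y key
  refine ⟨fun b => if hb : b ∈ s then x ⟨b, hb⟩ else 0, ?_⟩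
  intro e he
  rw [SL_apply]
  have h5 : ∑ b ∈ e.1.support, e.1 b * (if hb : b ∈ s then x ⟨b, hb⟩ else 0)
      = ∑ b ∈ s, e.1 b * (if hb : b ∈ s then x ⟨b, hb⟩ else 0) := by
    apply Finset.sum_subset (hsup e he)
    intro b _ hb
    rw [Finsupp.notMem_support_iff.1 hb, zero_mul]
  rw [h5, ← Finset.sum_coe_sort s]
  have h6 : ∀ j : {b // b ∈ s}, e.1 j.1 * (if hb : j.1 ∈ s then x ⟨j.1, hb⟩ else 0)
      = e.1 j.1 * x j := by
    intro j
    rw [dif_pos j.2]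
  rw [Finset.sum_congr rfl (fun j _ => h6 j)]
  exact hx ⟨e, he⟩

-- Zorn
lemma exists_maximal_good (hf : IsPureHom f) :
    ∃ Tm, T0 f ⊆ Tm ∧ Maximal (fun T => T0 f ⊆ T ∧ Good T) Tm := by
  classical
  apply zorn_subset_nonempty
  · intro c hc hchain hcne
    refine ⟨⋃₀ c, ⟨?_, ?_⟩, fun S hS => Set.subset_sUnion_of_mem hS⟩
    · obtain ⟨S, hS⟩ := hcne
      exact (hc hS).1.trans (Set.subset_sUnion_of_mem hS)
    · intro t ht
      have : ∃ S ∈ c, ↑t ⊆ S := by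
        induction t using Finset.induction_on with
        | empty =>
          obtain ⟨S, hS⟩ := hcne
          exact ⟨S, hS, by simp⟩
        | @insert e t' he ih =>
          have ht' : ↑t' ⊆ ⋃₀ c := by
            refine subset_trans ?_ ht
            simp [Finset.coe_insert]
          obtain ⟨S', hS', hS'sub⟩ := ih ht'
          have hem : e ∈ ⋃₀ c := ht (by simp)
          obtain ⟨S'', hS'', heS''⟩ := hem
          rcases hchain.total hS' hS'' with hle | hle
          · exact ⟨S'', hS'', by
              rw [Finset.coe_insert]
              exact Set.insert_subset heS'' (hS'sub.trans hle)⟩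
          · exact ⟨S', hS', by
              rw [Finset.coe_insert]
              exact Set.insert_subset (hle heS'') hS'sub⟩
      obtain ⟨S, hSc, hSt⟩ := this
      exact (hc hSc).2 t hSt
  · exact ⟨Set.Subset.rfl, good_T0 f hf⟩

variable [IsNoetherianRing A] [IsLocalRing A]
    [IsAdicComplete (IsLocalRing.maximalIdeal A) A]

lemma step_V (hf : IsPureHom f) (Tm : Set ((B →₀ A) × A))
    (hT0 : T0 f ⊆ Tm) (hmax : Maximal (fun T => T0 f ⊆ T ∧ Good T) Tm) (b₀ : B) :
    ∃ v : A, (Finsupp.single b₀ (1:A), v) ∈ Tm := by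
  classical
  have hgood : Good Tm := hmax.1.2
  set ι' : Type u := {t : Finset ((B →₀ A) × A) // ↑t ⊆ Tm} with hι'
  have hsolve : ∀ t : ι', ∃ x : B → A, ∀ e ∈ t.1, SL e.1 x = e.2 :=
    fun t => hgood t.1 t.2
  set xt : ι' → (B → A) := fun t => Classical.choose (hsolve t) with hxt
  have hxtspec : ∀ t : ι', ∀ e ∈ t.1.val, SL e.1 (xt t) = e.2 := by
    intro t
    exact Classical.choose_spec (hsolve t)
  set Hsol : ι' → Submodule A (B → A) :=
    fun t => ⨅ e ∈ t.1, LinearMap.ker (SL e.1) with hHsol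
  have hHmem : ∀ (t : ι') (y : B → A), y ∈ Hsol t ↔ ∀ e ∈ t.1.val, SL e.1 y = 0 := by
    intro t y
    simp [hHsol, Submodule.mem_iInf, LinearMap.mem_ker]
  set a' : ι' → A := fun t => xt t b₀ with ha'
  set I' : ι' → Ideal A := fun t => Submodule.map (LinearMap.proj b₀) (Hsol t) with hI'
  have hFIP : ∀ σ : Finset ι', ∃ x : A, ∀ t ∈ σ, x - a' t ∈ I' t := by
    intro σ
    set uu : Finset ((B →₀ A) × A) := σ.sup (fun t => t.1) with huu
    have huT : ↑uu ⊆ Tm := by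
      intro e he
      rw [huu] at he
      rw [Finset.mem_coe, Finset.mem_sup] at he
      obtain ⟨t, _, het⟩ := he
      exact t.2 het
    obtain ⟨y, hy⟩ := hgood uu huT
    refine ⟨y b₀, ?_⟩
    intro t htσ
    refine ⟨y - xt t, (hHmem t _).2 ?_, rfl⟩
    intro e he
    have h1 : SL e.1 y = e.2 := hy e (by
      rw [huu]; exact Finset.mem_sup.2 ⟨t, htσ, he⟩)
    rw [map_sub, h1, hxtspec t e he, sub_self]
  obtain ⟨v, hv⟩ := linear_compact a' I' hFIP
  have hsolv : ∀ t : ι', ∃ x : B → A, (∀ e ∈ t.1.val, SL e.1 x = e.2) ∧ x b₀ = v := by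
    intro t
    obtain ⟨hh, hhmem, hhb⟩ := hv t
    refine ⟨xt t + hh, ?_, ?_⟩
    · intro e he
      rw [map_add, hxtspec t e he, (hHmem t hh).1 hhmem e he, add_zero]
    · show xt t b₀ + hh b₀ = v
      have hhb' : hh b₀ = v - xt t b₀ := hhb
      rw [hhb']
      ring
  set eb : (B →₀ A) × A := (Finsupp.single b₀ (1:A), v) with heb
  have hgood2 : Good (Tm ∪ {eb}) := by
    intro t' ht'
    have hsub : ↑(t'.erase eb) ⊆ Tm := by
      intro e he
      rw [Finset.coe_erase] at he
      obtain ⟨he1, he2⟩ := he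
      rcases ht' he1 with h | h
      · exact h
      · exact absurd h he2
    obtain ⟨x, hx, hxb⟩ := hsolv ⟨t'.erase eb, hsub⟩
    refine ⟨x, ?_⟩
    intro e he
    by_cases heq : e = eb
    · rw [heq, heb]
      rw [SL_single, one_mul, hxb]
    · exact hx e (Finset.mem_erase.2 ⟨heq, he⟩)
  have : Tm ∪ {eb} ⊆ Tm := by
    apply hmax.2
    · exact ⟨hT0.trans Set.subset_union_left, hgood2⟩
    · exact Set.subset_union_left
  exact ⟨v, this (Set.mem_union_right _ rfl)⟩

theorem final_splitting (hf : IsPureHom f) :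
    ∃ g : PushMod f →ₗ[A] A, ∀ a : A, g (PushMod.of f (f a)) = a := by
  classical
  obtain ⟨Tm, hT0, hmax⟩ := exists_maximal_good f hf
  have hV := step_V f hf Tm hT0 hmax
  set v : B → A := fun b => Classical.choose (hV b) with hvdef
  have hvmem : ∀ b : B, (Finsupp.single b (1:A), v b) ∈ Tm :=
    fun b => Classical.choose_spec (hV b)
  have hgood : Good Tm := hmax.1.2
  -- every equation of Tm is satisfied by v
  have keySat : ∀ e ∈ Tm, SL e.1 v = e.2 := by
    intro e he
    set t : Finset ((B →₀ A) × A) :=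
      insert e ((e.1.support).image (fun b => ((Finsupp.single b (1:A), v b)))) with htdef
    have htsub : ↑t ⊆ Tm := by
      intro e' he'
      rw [htdef, Finset.coe_insert] at he'
      rcases he' with h | h
      · rw [h]; exact he
      · rw [Finset.coe_image] at h
        obtain ⟨b, _, rfl⟩ := h
        exact hvmem b
    obtain ⟨x, hx⟩ := hgood t htsub
    have hxe : SL e.1 x = e.2 := hx e (by rw [htdef]; exact Finset.mem_insert_self _ _)
    have hagree : ∀ b ∈ e.1.support, v b = x b := by
      intro b hb
      have : SL (Finsupp.single b (1:A)) x = v b := by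
        refine hx ((Finsupp.single b (1:A), v b)) ?_
        rw [htdef]
        exact Finset.mem_insert_of_mem (Finset.mem_image_of_mem _ hb)
      rw [SL_single, one_mul] at this
      exact this.symm
    rw [SL_eq_of_agree e.1 v x hagree]
    exact hxe
  -- the three families of equations in T0
  have h_one : v (1 : B) = 1 := by
    have he : ((Finsupp.single (1:B) (1:A), (1:A)) : (B →₀ A) × A) ∈ T0 f := by
      show LB f (Finsupp.single (1:B) (1:A)) = PushMod.of f (f 1)
      rw [LB_single, one_smul, map_one]
    have := keySat _ (hT0 he)
    rw [SL_single, one_mul] at this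
    exact this
  have h_add : ∀ b b' : B, v (b + b') = v b + v b' := by
    intro b b'
    have he : ((Finsupp.single (b + b') (1:A) - Finsupp.single b 1 - Finsupp.single b' 1, (0:A))
        : (B →₀ A) × A) ∈ T0 f := by
      show LB f _ = PushMod.of f (f 0)
      rw [map_sub, map_sub, LB_single, LB_single, LB_single, one_smul, one_smul, one_smul, map_zero]
      show PushMod.of f (b + b') - PushMod.of f b - PushMod.of f b' = PushMod.of f 0
      show (b + b') - b - b' = (0 : B)
      ring
    have := keySat _ (hT0 he)
    rw [map_sub, map_sub] at this
    rw [LinearMap.sub_apply, LinearMap.sub_apply, SL_single, SL_single, SL_single] at this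
    simp only [one_mul] at this
    linear_combination this
  have h_smul : ∀ (c : A) (b : B), v (f c * b) = c * v b := by
    intro c b
    have he : ((Finsupp.single (f c * b) (1:A) - Finsupp.single b c, (0:A))
        : (B →₀ A) × A) ∈ T0 f := by
      show LB f _ = PushMod.of f (f 0)
      rw [map_sub, LB_single, LB_single, one_smul, map_zero]
      show PushMod.of f (f c * b) - c • PushMod.of f b = PushMod.of f 0
      rw [PushMod.smul_def]
      show (f c * b) - (f c * b) = (0 : B)
      ring
    have := keySat _ (hT0 he)
    rw [map_sub, LinearMap.sub_apply, SL_single, SL_single, one_mul] at this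
    have this' : v (f c * b) - c * v b = 0 := this
    linear_combination this'
  refine ⟨{ toFun := fun p => v p
            map_add' := h_add
            map_smul' := fun c p => h_smul c p }, ?_⟩
  intro a
  show v (f a) = a
  have : f a = f a * 1 := by ring
  rw [this, h_smul a 1, h_one, mul_one]

end Part4

/-- If `(A, 𝔪)` is a noetherian complete local ring, then every pure ring homomorphism
`f : A → B` splits as a homomorphism of `A`-modules. -/
theorem pure_ringHom_splits_of_complete_local
    {A B : Type u} [CommRing A] [CommRing B] [IsNoetherianRing A] [IsLocalRing A]
    [IsAdicComplete (IsLocalRing.maximalIdeal A) A]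
    (f : A →+* B) (hf : IsPureHom f) :
    ∃ g : PushMod f →ₗ[A] A, ∀ a : A, g (PushMod.of f (f a)) = a :=
  final_splitting f hf
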